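/- arXiv:math/0303243 — 2 statements merged into one kernel-verified Lean document; each statement's English description precedes it below -/
import Mathlib

section
/- Let x, y, z be three pairwise distinct points in the complex plane and let x' be a point with C⁻¹|x-y| ≤ |x'-y| ≤ C|x-y| for some constant C ≥ 1. Then |c(x,y,z) − c(x',y,z)| ≤ (4 + 2C)·|x−x'|/(|x−y|·|x−z|), where c(p,q,r) denotes the Menger curvature, i.e. the reciprocal of the radius of the circle through p, q, r (equal to 2·dist(p, line(q,r))/(|p−q|·|p−r|)). -/
noncomputable def mengerCurv (p q r : ℂ) : ℝ :=
  2 * Metric.infDist p ((affineSpan ℝ ({q, r} : Set ℂ) : AffineSubspace ℝ ℂ) : Set ℂ) /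
    (dist p q * dist p r)

lemma key_real (d d' A B A' B' e C : ℝ)
    (hA : 0 < A) (hB : 0 < B) (hA' : 0 < A') (hB' : 0 < B')
    (hd'0 : 0 ≤ d')
    (hdd' : |d - d'| ≤ e)
    (hd'A : d' ≤ A') (hd'B : d' ≤ B')
    (hAA' : |A' - A| ≤ e) (hBB' : |B' - B| ≤ e)
    (hC : 1 ≤ C) (hCA : C⁻¹ * A ≤ A') :
    |2*d/(A*B) - 2*d'/(A'*B')| ≤ (4 + 2*C) * e / (A*B) := by
  have hC0 : (0:ℝ) < C := lt_of_lt_of_le one_pos hC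
  have he : 0 ≤ e := le_trans (abs_nonneg _) hdd'
  have hACA' : A ≤ C * A' := by
    rw [inv_mul_le_iff₀ hC0] at hCA; exact hCA
  have hid : 2*d/(A*B) - 2*d'/(A'*B') =
      2*(d-d')/(A*B) + 2*d'*(A'-A)/(A*B*A') + 2*d'*(B'-B)/(B*A'*B') := by
    field_simp
    ring
  rw [hid]
  have t1 : |2*(d-d')/(A*B)| ≤ 2*e/(A*B) := by
    rw [abs_div, abs_of_pos (mul_pos hA hB), abs_mul, abs_two]
    gcongr
  have t2 : |2*d'*(A'-A)/(A*B*A')| ≤ 2*e/(A*B) := by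
    rw [abs_div, abs_of_pos (by positivity : (0:ℝ) < A*B*A'), abs_mul, abs_mul, abs_two,
      abs_of_nonneg hd'0]
    have hnum : 2*d'*|A'-A| ≤ 2*A'*e := by nlinarith [abs_nonneg (A'-A)]
    calc 2*d'*|A'-A| / (A*B*A') ≤ 2*A'*e / (A*B*A') := by gcongr
      _ = 2*e/(A*B) := by field_simp
  have t3 : |2*d'*(B'-B)/(B*A'*B')| ≤ 2*C*e/(A*B) := by
    rw [abs_div, abs_of_pos (by positivity : (0:ℝ) < B*A'*B'), abs_mul, abs_mul, abs_two,
      abs_of_nonneg hd'0]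
    have hnum : 2*d'*|B'-B| ≤ 2*B'*e := by nlinarith [abs_nonneg (B'-B)]
    calc 2*d'*|B'-B| / (B*A'*B') ≤ 2*B'*e / (B*A'*B') := by gcongr
      _ = 2*e/(B*A') := by field_simp
      _ ≤ 2*C*e/(A*B) := by
          rw [div_le_div_iff₀ (by positivity) (by positivity)]
          nlinarith [mul_le_mul_of_nonneg_left hACA' (by positivity : (0:ℝ) ≤ 2*e*B)]
  have hsum : (4 + 2*C)*e/(A*B) = 2*e/(A*B) + 2*e/(A*B) + 2*C*e/(A*B) := by ring
  calc |2*(d-d')/(A*B) + 2*d'*(A'-A)/(A*B*A') + 2*d'*(B'-B)/(B*A'*B')|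
      ≤ |2*(d-d')/(A*B) + 2*d'*(A'-A)/(A*B*A')| + |2*d'*(B'-B)/(B*A'*B')| := abs_add_le _ _
    _ ≤ |2*(d-d')/(A*B)| + |2*d'*(A'-A)/(A*B*A')| + |2*d'*(B'-B)/(B*A'*B')| := by
        have := abs_add_le (2*(d-d')/(A*B)) (2*d'*(A'-A)/(A*B*A')); linarith
    _ ≤ (4 + 2*C)*e/(A*B) := by rw [hsum]; linarith

theorem stmt0 (C : ℝ) (hC : 1 ≤ C) (x y z x' : ℂ)
    (hxy : x ≠ y) (hxz : x ≠ z) (hyz : y ≠ z)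
    (h1 : C⁻¹ * dist x y ≤ dist x' y) (h2 : dist x' y ≤ C * dist x y) :
    |mengerCurv x y z - mengerCurv x' y z| ≤
      (4 + 2 * C) * dist x x' / (dist x y * dist x z) := by
  have hC0 : (0:ℝ) < C := lt_of_lt_of_le one_pos hC
  set L : Set ℂ := ((affineSpan ℝ ({y, z} : Set ℂ) : AffineSubspace ℝ ℂ) : Set ℂ) with hL
  have hyL : y ∈ L := subset_affineSpan ℝ ({y, z} : Set ℂ) (by simp)
  have hzL : z ∈ L := subset_affineSpan ℝ ({y, z} : Set ℂ) (by simp)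
  have hA : 0 < dist x y := dist_pos.2 hxy
  have hB : 0 < dist x z := dist_pos.2 hxz
  have hA' : 0 < dist x' y := lt_of_lt_of_le (by positivity) h1
  have hd0 : 0 ≤ Metric.infDist x L := Metric.infDist_nonneg
  have hd'0 : 0 ≤ Metric.infDist x' L := Metric.infDist_nonneg
  have hdd' : |Metric.infDist x L - Metric.infDist x' L| ≤ dist x x' := by
    rw [abs_sub_le_iff]
    constructor
    · have := Metric.infDist_le_infDist_add_dist (x := x) (y := x') (s := L)
      linarith
    · have := Metric.infDist_le_infDist_add_dist (x := x') (y := x) (s := L)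
      rw [dist_comm x' x] at this; linarith
  have hcx : mengerCurv x y z = 2 * Metric.infDist x L / (dist x y * dist x z) := rfl
  have hcx' : mengerCurv x' y z = 2 * Metric.infDist x' L / (dist x' y * dist x' z) := rfl
  rw [hcx, hcx']
  by_cases hx'z : x' = z
  · subst hx'z
    have hd'z : Metric.infDist x' L = 0 := Metric.infDist_zero_of_mem hzL
    rw [hd'z]
    simp only [mul_zero, zero_div, sub_zero]
    have hdle : Metric.infDist x L ≤ dist x x' := by
      rw [hd'z, sub_zero] at hdd'
      rwa [abs_of_nonneg hd0] at hdd'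
    rw [abs_of_nonneg (by positivity)]
    have hnum : 2 * Metric.infDist x L ≤ (4 + 2*C) * dist x x' := by nlinarith [dist_nonneg (x := x) (y := x')]
    gcongr
  · have hB' : 0 < dist x' z := dist_pos.2 hx'z
    have hd'A : Metric.infDist x' L ≤ dist x' y := Metric.infDist_le_dist_of_mem hyL
    have hd'B : Metric.infDist x' L ≤ dist x' z := Metric.infDist_le_dist_of_mem hzL
    have hAA' : |dist x' y - dist x y| ≤ dist x x' := by
      have := abs_dist_sub_le x' x y; rwa [dist_comm x' x] at this
    have hBB' : |dist x' z - dist x z| ≤ dist x x' := by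
      have := abs_dist_sub_le x' x z; rwa [dist_comm x' x] at this
    exact key_real _ _ _ _ _ _ _ _ hA hB hA' hB' hd'0 hdd' hd'A hd'B hAA' hBB' hC h1
end

section
/- Let x, y, z be pairwise distinct points in the plane, let L be a line, and suppose sin∠(L, line(x,y)) ≤ ε₁ and sin∠(L, line(x,z)) ≤ ε₂. Then sin∠(y, x, z) ≤ ε₁ + ε₂, and consequently the Menger curvature satisfies c(x,y,z) = 2 sin∠(y,x,z)/|y−z| ≤ 2(ε₁ + ε₂)/|y−z|. -/
open InnerProductGeometry RealInnerProductSpace in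
lemma sin_angle_norm_eq (a b : ℂ) :
    Real.sin (InnerProductGeometry.angle a b) * (‖a‖ * ‖b‖)
      = |a.re * b.im - a.im * b.re| := by
  rw [sin_angle_mul_norm_mul_norm]
  have h1 : (inner ℝ a a : ℝ) = a.re * a.re + a.im * a.im := by
    rw [Complex.inner]; simp [Complex.mul_re]
  have h2 : (inner ℝ b b : ℝ) = b.re * b.re + b.im * b.im := by
    rw [Complex.inner]; simp [Complex.mul_re]
  have h3 : (inner ℝ a b : ℝ) = a.re * b.re + a.im * b.im := by
    rw [Complex.inner]; simp [Complex.mul_re]; ring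
  rw [h1, h2, h3, show (a.re * a.re + a.im * a.im) * (b.re * b.re + b.im * b.im) -
      (a.re * b.re + a.im * b.im) * (a.re * b.re + a.im * b.im)
      = (a.re * b.im - a.im * b.re) ^ 2 by ring, Real.sqrt_sq_eq_abs]

/- `Real.sin (InnerProductGeometry.angle u v)` is the sine of the (acute) angle between the
lines with direction vectors `u` and `v`: it is unchanged when `u` or `v` is replaced by a
nonzero multiple, since `sin (π − θ) = sin θ`. `EuclideanGeometry.angle y x z` is the angle
at the vertex `x` of the triangle `x, y, z`. -/
theorem stmt13 (x y z u : ℂ) (hxy : x ≠ y) (hxz : x ≠ z) (hyz : y ≠ z) (hu : u ≠ 0)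
    (ε₁ ε₂ : ℝ)
    (h₁ : Real.sin (InnerProductGeometry.angle u (y - x)) ≤ ε₁)
    (h₂ : Real.sin (InnerProductGeometry.angle u (z - x)) ≤ ε₂) :
    Real.sin (EuclideanGeometry.angle y x z) ≤ ε₁ + ε₂ ∧
    2 * Real.sin (EuclideanGeometry.angle y x z) / dist y z ≤ 2 * (ε₁ + ε₂) / dist y z := by
  set a := y - x with ha
  set c := z - x with hc
  have hea : EuclideanGeometry.angle y x z = InnerProductGeometry.angle a c := rfl
  have ha0 : a ≠ 0 := sub_ne_zero.2 (Ne.symm hxy)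
  have hc0 : c ≠ 0 := sub_ne_zero.2 (Ne.symm hxz)
  have hun : (0:ℝ) < ‖u‖ := norm_pos_iff.2 hu
  have han : (0:ℝ) < ‖a‖ := norm_pos_iff.2 ha0
  have hcn : (0:ℝ) < ‖c‖ := norm_pos_iff.2 hc0
  have key : Real.sin (InnerProductGeometry.angle a c)
      ≤ Real.sin (InnerProductGeometry.angle u a) + Real.sin (InnerProductGeometry.angle u c) := by
    have e1 := sin_angle_norm_eq a c
    have e2 := sin_angle_norm_eq u a
    have e3 := sin_angle_norm_eq u c
    -- cross(a,c) * ‖u‖² = cross(u,c) * dot(u,a) - cross(u,a) * dot(u,c)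
    have hdot_a : |u.re * a.re + u.im * a.im| ≤ ‖u‖ * ‖a‖ := by
      have := abs_real_inner_le_norm u a
      rw [Complex.inner, Complex.mul_re] at this
      simp only [Complex.conj_re, Complex.conj_im, neg_mul, sub_neg_eq_add] at this
      rw [show u.re * a.re + u.im * a.im = a.re * u.re - a.im * -u.im by ring]; exact this
    have hdot_c : |u.re * c.re + u.im * c.im| ≤ ‖u‖ * ‖c‖ := by
      have := abs_real_inner_le_norm u c
      rw [Complex.inner, Complex.mul_re] at this
      simp only [Complex.conj_re, Complex.conj_im, neg_mul, sub_neg_eq_add] at this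
      rw [show u.re * c.re + u.im * c.im = c.re * u.re - c.im * -u.im by ring]; exact this
    have hid : (a.re * c.im - a.im * c.re) * (u.re * u.re + u.im * u.im)
        = (u.re * c.im - u.im * c.re) * (u.re * a.re + u.im * a.im)
          - (u.re * a.im - u.im * a.re) * (u.re * c.re + u.im * c.im) := by ring
    have hnu : ‖u‖ * ‖u‖ = u.re * u.re + u.im * u.im := by
      rw [← sq, ← Complex.normSq_eq_norm_sq, Complex.normSq_apply]
    have hmain : |a.re * c.im - a.im * c.re| * (‖u‖ * ‖u‖)
        ≤ |u.re * c.im - u.im * c.re| * (‖u‖ * ‖a‖)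
          + |u.re * a.im - u.im * a.re| * (‖u‖ * ‖c‖) := by
      rw [hnu, ]
      calc |a.re * c.im - a.im * c.re| * (u.re * u.re + u.im * u.im)
          = |(a.re * c.im - a.im * c.re) * (u.re * u.re + u.im * u.im)| := by
            have hS : (0:ℝ) ≤ u.re * u.re + u.im * u.im :=
              add_nonneg (mul_self_nonneg _) (mul_self_nonneg _)
            rw [abs_mul, abs_of_nonneg hS]
        _ ≤ |u.re * c.im - u.im * c.re| * |u.re * a.re + u.im * a.im|
              + |u.re * a.im - u.im * a.re| * |u.re * c.re + u.im * c.im| := by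
            rw [hid]; refine (abs_sub _ _).trans ?_; rw [abs_mul, abs_mul]
        _ ≤ _ := by
            gcongr
    -- translate back to sines
    have : Real.sin (InnerProductGeometry.angle a c) * (‖a‖ * ‖c‖) * (‖u‖ * ‖u‖)
        ≤ Real.sin (InnerProductGeometry.angle u c) * (‖u‖ * ‖c‖) * (‖u‖ * ‖a‖)
          + Real.sin (InnerProductGeometry.angle u a) * (‖u‖ * ‖a‖) * (‖u‖ * ‖c‖) := by
      rw [e1, e2, e3]; linarith [hmain]
    have hpos : (0:ℝ) < ‖a‖ * ‖c‖ * (‖u‖ * ‖u‖) := by positivity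
    nlinarith [this, hpos]
  have hsin1 := h₁
  have hfirst : Real.sin (EuclideanGeometry.angle y x z) ≤ ε₁ + ε₂ := by
    rw [hea]; linarith
  refine ⟨hfirst, ?_⟩
  have hdyz : (0:ℝ) < dist y z := dist_pos.2 hyz
  gcongr
end
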